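/- In any centered Kleene algebra A with center c, for all a, b ∈ A: if a ∧ c = b ∧ c and ¬a ∧ c = ¬b ∧ c then a = b. -/
import Mathlib


/-- A centered Kleene algebra: a distributive lattice with an involutive
De Morgan negation satisfying the Kleene inequality, and a center `c` with `¬c = c`. -/
class CenteredKleeneAlgebra (A : Type*) extends DistribLattice A where
  neg : A → A
  center : A
  neg_neg : ∀ a : A, neg (neg a) = a
  neg_inf : ∀ a b : A, neg (a ⊓ b) = neg a ⊔ neg b
  kleene : ∀ a b : A, neg a ⊓ a ≤ neg b ⊔ b
  neg_center : neg center = center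

open CenteredKleeneAlgebra

/-- in a centered Kleene algebra with center `c`,
if `a ⊓ c = b ⊓ c` and `¬a ⊓ c = ¬b ⊓ c` then `a = b`. -/
theorem centered_kleene_cancel {A : Type*} [CenteredKleeneAlgebra A] (a b : A)
    (h1 : a ⊓ center = b ⊓ center) (h2 : neg a ⊓ center = neg b ⊓ center) :
    a = b := by
  have nsup : ∀ x y : A, neg (x ⊔ y) = neg x ⊓ neg y := by
    intro x y
    have := neg_inf (neg x) (neg y)
    rw [CenteredKleeneAlgebra.neg_neg, CenteredKleeneAlgebra.neg_neg] at this
    have := congrArg neg this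
    rw [CenteredKleeneAlgebra.neg_neg] at this
    exact this.symm
  have h3 : a ⊔ center = b ⊔ center := by
    have : neg (a ⊔ center) = neg (b ⊔ center) := by
      rw [nsup, nsup, neg_center, h2]
    have := congrArg neg this
    rwa [CenteredKleeneAlgebra.neg_neg, CenteredKleeneAlgebra.neg_neg] at this
  exact eq_of_inf_eq_sup_eq h1
    h3
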